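/- arXiv:2506.06044 — 2 statements merged into one kernel-verified Lean document; each statement's English description precedes it below -/
import Mathlib

section
/- Let G be a simple graph on a vertex type V, let v ∈ V, let N₁ and N₂ be disjoint sets with N₁ ∪ N₂ = N_G(v), and let G' be the exclusive-split graph of G at v determined by (N₁, N₂). Suppose u ∈ V with u ≠ v is such that inl u is a claw center in G' but u is not a claw center in G. Then u ∈ N_G(v), and there exists a vertex a ∈ N_G(v) ∩ N_G(u) such that u and a lie in different parts of the split (u ∈ N₁ and a ∈ N₂, or u ∈ N₂ and a ∈ N₁); that is, the split removed an edge (namely between a and the copy of v adjacent to u) inside the neighborhood of u. -/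
/-- A vertex `u` of `H` is a claw center if it has three distinct pairwise
non-adjacent neighbors. -/
def IsClawCenter {W : Type*} (H : SimpleGraph W) (u : W) : Prop :=
  ∃ a b c : W, a ≠ b ∧ a ≠ c ∧ b ≠ c ∧
    H.Adj u a ∧ H.Adj u b ∧ H.Adj u c ∧
    ¬ H.Adj a b ∧ ¬ H.Adj a c ∧ ¬ H.Adj b c

/-- The exclusive-split graph of `G` at `v` determined by `(N₁, N₂)`: the graph
on `V ⊕ Unit` where `Sum.inl v` plays the role of the copy `v₁` (adjacent to
`N₁`) and `Sum.inr ()` the role of the copy `v₂` (adjacent to `N₂`), and all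
other adjacencies among vertices different from `v` are as in `G`. -/
def splitGraph {V : Type*} (G : SimpleGraph V) (v : V) (N₁ N₂ : Set V) :
    SimpleGraph (V ⊕ Unit) where
  Adj x y :=
    match x, y with
    | Sum.inl u, Sum.inl w =>
        (u ≠ v ∧ w ≠ v ∧ G.Adj u w) ∨ (u = v ∧ w ≠ v ∧ w ∈ N₁) ∨
          (u ≠ v ∧ w = v ∧ u ∈ N₁)
    | Sum.inl u, Sum.inr _ => u ≠ v ∧ u ∈ N₂
    | Sum.inr _, Sum.inl u => u ≠ v ∧ u ∈ N₂
    | Sum.inr _, Sum.inr _ => False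
  symm := by
    constructor
    rintro (u | u) (w | w) h
    · rcases h with ⟨h1, h2, h3⟩ | ⟨h1, h2, h3⟩ | ⟨h1, h2, h3⟩
      · exact Or.inl ⟨h2, h1, h3.symm⟩
      · exact Or.inr (Or.inr ⟨h2, h1, h3⟩)
      · exact Or.inr (Or.inl ⟨h2, h1, h3⟩)
    · exact h
    · exact h
    · exact h.elim
  loopless := by
    constructor
    rintro (u | u) h
    · rcases h with ⟨h1, h2, h3⟩ | ⟨h1, h2, h3⟩ | ⟨h1, h2, h3⟩
      · exact G.loopless.irrefl u h3
      · exact h2 h1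
      · exact h1 h2
    · exact h

/-- Auxiliary: if `u ∈ S`, `b, c` are neighbors of `u` avoiding `S`, mutually
non-adjacent, and `u` is not a claw center, one of `b, c` is a neighbor of `v`
lying in `T`. -/
lemma split_aux {V : Type*} (G : SimpleGraph V) (v u : V) (S T : Set V)
    (hunion : S ∪ T = G.neighborSet v)
    (hold : ¬ IsClawCenter G u)
    (huS : u ∈ S) (b c : V) (hbv : b ≠ v) (hcv : c ≠ v) (hbc : b ≠ c)
    (hub : G.Adj u b) (huc : G.Adj u c) (nbc : ¬ G.Adj b c)
    (hbS : b ∉ S) (hcS : c ∉ S) :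
    ∃ a : V, a ∈ G.neighborSet v ∧ a ∈ G.neighborSet u ∧ a ∈ T := by
  have huv : G.Adj v u := by
    have : u ∈ G.neighborSet v := by rw [← hunion]; exact Or.inl huS
    exact this
  by_cases hvb : G.Adj v b
  · have hbm : b ∈ S ∪ T := by rw [hunion]; exact hvb
    rcases hbm with h | h
    · exact absurd h hbS
    · exact ⟨b, hvb, hub, h⟩
  · by_cases hvc : G.Adj v c
    · have hcm : c ∈ S ∪ T := by rw [hunion]; exact hvc
      rcases hcm with h | h
      · exact absurd h hcS
      · exact ⟨c, hvc, huc, h⟩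
    · exact absurd ⟨v, b, c, fun h => hbv h.symm, fun h => hcv h.symm, hbc,
        huv.symm, hub, huc, hvb, hvc, nbc⟩ hold

/-- If `Sum.inl u` (with `u ≠ v`) is a claw center in the exclusive-split graph
but `u` is not a claw center in `G`, then `u ∈ N_G(v)` and there is a vertex
`a ∈ N_G(v) ∩ N_G(u)` lying in the other part of the split than `u`; i.e. the
split removed an edge inside the neighborhood of `u`. -/
theorem new_claw_center_from_removed_edge {V : Type*} (G : SimpleGraph V)
    (v : V) (N₁ N₂ : Set V)
    (hdisj : Disjoint N₁ N₂) (hunion : N₁ ∪ N₂ = G.neighborSet v)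
    (u : V) (huv : u ≠ v)
    (hnew : IsClawCenter (splitGraph G v N₁ N₂) (Sum.inl u))
    (hold : ¬ IsClawCenter G u) :
    u ∈ G.neighborSet v ∧
      ∃ a : V, a ∈ G.neighborSet v ∧ a ∈ G.neighborSet u ∧
        ((u ∈ N₁ ∧ a ∈ N₂) ∨ (u ∈ N₂ ∧ a ∈ N₁)) := by
  obtain ⟨a, b, c, hab, hac, hbc, h1, h2, h3, nab, nac, nbc⟩ := hnew
  have hunion' : N₂ ∪ N₁ = G.neighborSet v := by rw [Set.union_comm]; exact hunion
  have memNv : ∀ {x : V}, x ∈ N₁ ∨ x ∈ N₂ → x ∈ G.neighborSet v := fun h => by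
    rw [← hunion]; exact h
  -- classification of a neighbor of `Sum.inl u` in the split graph
  have cls : ∀ x : V ⊕ Unit, (splitGraph G v N₁ N₂).Adj (Sum.inl u) x →
      (∃ w : V, x = Sum.inl w ∧ w ≠ v ∧ G.Adj u w) ∨
        (x = Sum.inl v ∧ u ∈ N₁) ∨ (x = Sum.inr () ∧ u ∈ N₂) := by
    rintro (w | ⟨⟩) h
    · rcases h with ⟨_, hwv, huw⟩ | ⟨h, _⟩ | ⟨_, hwv, hu1⟩
      · exact Or.inl ⟨w, rfl, hwv, huw⟩
      · exact absurd h huv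
      · exact Or.inr (Or.inl ⟨by rw [hwv], hu1⟩)
    · exact Or.inr (Or.inr ⟨rfl, h.2⟩)
  -- non-adjacency extraction helpers
  have nN : ∀ {w1 w2 : V}, w1 ≠ v → w2 ≠ v →
      ¬ (splitGraph G v N₁ N₂).Adj (Sum.inl w1) (Sum.inl w2) → ¬ G.Adj w1 w2 :=
    fun h1 h2 n ha => n (Or.inl ⟨h1, h2, ha⟩)
  have nV : ∀ {w : V}, w ≠ v →
      ¬ (splitGraph G v N₁ N₂).Adj (Sum.inl v) (Sum.inl w) → w ∉ N₁ :=
    fun hw n hm => n (Or.inr (Or.inl ⟨rfl, hw, hm⟩))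
  have nV' : ∀ {w : V}, w ≠ v →
      ¬ (splitGraph G v N₁ N₂).Adj (Sum.inl w) (Sum.inl v) → w ∉ N₁ :=
    fun hw n hm => n (Or.inr (Or.inr ⟨hw, rfl, hm⟩))
  have nR : ∀ {w : V}, w ≠ v →
      ¬ (splitGraph G v N₁ N₂).Adj (Sum.inr ()) (Sum.inl w) → w ∉ N₂ :=
    fun hw n hm => n ⟨hw, hm⟩
  have nR' : ∀ {w : V}, w ≠ v →
      ¬ (splitGraph G v N₁ N₂).Adj (Sum.inl w) (Sum.inr ()) → w ∉ N₂ :=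
    fun hw n hm => n ⟨hw, hm⟩
  have inj : ∀ {x y : V}, (Sum.inl x : V ⊕ Unit) ≠ Sum.inl y → x ≠ y :=
    fun h e => h (by rw [e])
  rcases cls a h1 with ⟨a', rfl, hav, hua⟩ | ⟨rfl, hu1⟩ | ⟨rfl, hu2⟩
  · rcases cls b h2 with ⟨b', rfl, hbv, hub⟩ | ⟨rfl, hu1⟩ | ⟨rfl, hu2⟩
    · rcases cls c h3 with ⟨c', rfl, hcv, huc⟩ | ⟨rfl, hu1⟩ | ⟨rfl, hu2⟩
      · -- all normal: claw in G, contradiction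
        exact absurd ⟨a', b', c', inj hab, inj hac, inj hbc,
          hua, hub, huc, nN hav hbv nab, nN hav hcv nac, nN hbv hcv nbc⟩ hold
      · -- c special = inl v
        obtain ⟨x, hx1, hx2, hx3⟩ := split_aux G v u N₁ N₂ hunion hold hu1 a' b'
          hav hbv (inj hab) hua hub (nN hav hbv nab) (nV' hav nac) (nV' hbv nbc)
        exact ⟨memNv (Or.inl hu1), x, hx1, hx2, Or.inl ⟨hu1, hx3⟩⟩
      · -- c special = inr
        obtain ⟨x, hx1, hx2, hx3⟩ := split_aux G v u N₂ N₁ hunion' hold hu2 a' b'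
          hav hbv (inj hab) hua hub (nN hav hbv nab) (nR' hav nac) (nR' hbv nbc)
        exact ⟨memNv (Or.inr hu2), x, hx1, hx2, Or.inr ⟨hu2, hx3⟩⟩
    · -- b special = inl v
      rcases cls c h3 with ⟨c', rfl, hcv, huc⟩ | ⟨rfl, _⟩ | ⟨rfl, hu2⟩
      · obtain ⟨x, hx1, hx2, hx3⟩ := split_aux G v u N₁ N₂ hunion hold hu1 a' c'
          hav hcv (inj hac) hua huc (nN hav hcv nac) (nV' hav nab) (nV hcv nbc)
        exact ⟨memNv (Or.inl hu1), x, hx1, hx2, Or.inl ⟨hu1, hx3⟩⟩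
      · exact absurd rfl hbc
      · exact absurd hu2 (fun h => hdisj.ne_of_mem hu1 h rfl)
    · -- b special = inr
      rcases cls c h3 with ⟨c', rfl, hcv, huc⟩ | ⟨rfl, hu1⟩ | ⟨rfl, _⟩
      · obtain ⟨x, hx1, hx2, hx3⟩ := split_aux G v u N₂ N₁ hunion' hold hu2 a' c'
          hav hcv (inj hac) hua huc (nN hav hcv nac) (nR' hav nab) (nR hcv nbc)
        exact ⟨memNv (Or.inr hu2), x, hx1, hx2, Or.inr ⟨hu2, hx3⟩⟩
      · exact absurd hu2 (fun h => hdisj.ne_of_mem hu1 h rfl)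
      · exact absurd rfl hbc
  · -- a special = inl v
    rcases cls b h2 with ⟨b', rfl, hbv, hub⟩ | ⟨rfl, _⟩ | ⟨rfl, hu2⟩
    · rcases cls c h3 with ⟨c', rfl, hcv, huc⟩ | ⟨rfl, _⟩ | ⟨rfl, hu2⟩
      · obtain ⟨x, hx1, hx2, hx3⟩ := split_aux G v u N₁ N₂ hunion hold hu1 b' c'
          hbv hcv (inj hbc) hub huc (nN hbv hcv nbc) (nV hbv nab) (nV hcv nac)
        exact ⟨memNv (Or.inl hu1), x, hx1, hx2, Or.inl ⟨hu1, hx3⟩⟩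
      · exact absurd rfl hac
      · exact absurd hu2 (fun h => hdisj.ne_of_mem hu1 h rfl)
    · exact absurd rfl hab
    · exact absurd hu2 (fun h => hdisj.ne_of_mem hu1 h rfl)
  · -- a special = inr
    rcases cls b h2 with ⟨b', rfl, hbv, hub⟩ | ⟨rfl, hu1⟩ | ⟨rfl, _⟩
    · rcases cls c h3 with ⟨c', rfl, hcv, huc⟩ | ⟨rfl, hu1⟩ | ⟨rfl, _⟩
      · obtain ⟨x, hx1, hx2, hx3⟩ := split_aux G v u N₂ N₁ hunion' hold hu2 b' c'
          hbv hcv (inj hbc) hub huc (nN hbv hcv nbc) (nR hbv nab) (nR hcv nac)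
        exact ⟨memNv (Or.inr hu2), x, hx1, hx2, Or.inr ⟨hu2, hx3⟩⟩
      · exact absurd hu2 (fun h => hdisj.ne_of_mem hu1 h rfl)
      · exact absurd rfl hac
    · exact absurd hu2 (fun h => hdisj.ne_of_mem hu1 h rfl)
    · exact absurd rfl hab
end

section
/- Let G be a simple graph on a vertex type V, let v ∈ V, let N₁ and N₂ be disjoint sets with N₁ ∪ N₂ = N_G(v), and let G' be the exclusive-split graph of G at v determined by (N₁, N₂). Suppose the split preserves the connected components of the subgraph induced by N_G(v): for all a, b ∈ N_G(v), if a and b lie in the same connected component of the induced subgraph G[N_G(v)], then a ∈ N₁ ↔ b ∈ N₁. Then no new claw centers are created: if inl u (for u ∈ V, u ≠ v) is a claw center in G', then u is a claw center in G; and if inl v or inr () is a claw center in G', then v is a claw center in G. -/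
/-- If the exclusive split of `v` preserves the connected components of the
subgraph induced by `N(v)` (vertices in the same component of `G[N(v)]` go to
the same part), then the split creates no new claw centers: every claw center
of the split graph comes from a claw center of `G`. -/
theorem component_preserving_split_creates_no_claw_centers {V : Type*}
    (G : SimpleGraph V) (v : V) (N₁ N₂ : Set V)
    (hdisj : Disjoint N₁ N₂) (hunion : N₁ ∪ N₂ = G.neighborSet v)
    (hcomp : ∀ a b : ↥(G.neighborSet v),
      (G.induce (G.neighborSet v)).Reachable a b → ((a : V) ∈ N₁ ↔ (b : V) ∈ N₁)) :
    (∀ u : V, u ≠ v →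
        IsClawCenter (splitGraph G v N₁ N₂) (Sum.inl u) → IsClawCenter G u) ∧
    (IsClawCenter (splitGraph G v N₁ N₂) (Sum.inl v) → IsClawCenter G v) ∧
    (IsClawCenter (splitGraph G v N₁ N₂) (Sum.inr ()) → IsClawCenter G v) := by
  set G' := splitGraph G v N₁ N₂ with hG'
  have hN₁ : ∀ u, u ∈ N₁ → G.Adj v u := by
    intro u hu
    have : u ∈ G.neighborSet v := hunion ▸ Set.mem_union_left _ hu
    exact this
  have hN₂ : ∀ u, u ∈ N₂ → G.Adj v u := by
    intro u hu
    have : u ∈ G.neighborSet v := hunion ▸ Set.mem_union_right _ hu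
    exact this
  have hmem : ∀ u, G.Adj v u → u ∈ N₁ ∨ u ∈ N₂ := by
    intro u h
    have : u ∈ N₁ ∪ N₂ := hunion ▸ h
    exact this
  have key : ∀ u w : V, G.Adj v u → G.Adj v w → G.Adj u w → (u ∈ N₁ ↔ w ∈ N₁) := by
    intro u w hu hw h
    exact hcomp ⟨u, hu⟩ ⟨w, hw⟩ (SimpleGraph.Adj.reachable (by simpa using h))
  refine ⟨?_, ?_, ?_⟩
  · rintro u huv ⟨a, b, c, hab, hac, hbc, ha, hb, hc, nab, nac, nbc⟩
    set f : V ⊕ Unit → V := Sum.elim id (fun _ => v) with hf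
    have adjG : ∀ x, G'.Adj (Sum.inl u) x → G.Adj u (f x) := by
      rintro (w | w) hx
      · rcases hx with ⟨_, _, h3⟩ | ⟨h1, _, _⟩ | ⟨_, hwv, h3⟩
        · exact h3
        · exact absurd h1 huv
        · show G.Adj u w
          rw [hwv]
          exact (hN₁ u h3).symm
      · exact (hN₂ u hx.2).symm
    have memN₁ : ∀ hx : G'.Adj (Sum.inl u) (Sum.inl v), u ∈ N₁ := by
      intro hx
      rcases hx with ⟨_, h2, _⟩ | ⟨h1, _, _⟩ | ⟨_, _, h3⟩
      · exact absurd rfl h2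
      · exact absurd h1 huv
      · exact h3
    have adjuw : ∀ w, w ≠ v → G'.Adj (Sum.inl u) (Sum.inl w) → G.Adj u w := by
      intro w hwv hx
      rcases hx with ⟨_, _, h3⟩ | ⟨h1, _, _⟩ | ⟨_, h2, _⟩
      · exact h3
      · exact absurd h1 huv
      · exact absurd h2 hwv
    have inj : ∀ x y, G'.Adj (Sum.inl u) x → G'.Adj (Sum.inl u) y → x ≠ y →
        f x ≠ f y := by
      rintro (w | w) (w' | w') hx hy hxy
      · intro h
        simp only [hf, Sum.elim_inl, id_eq] at h
        exact hxy (by rw [h])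
      · intro h
        simp only [hf, Sum.elim_inl, Sum.elim_inr, id_eq] at h
        subst h
        exact Set.disjoint_left.mp hdisj (memN₁ hx) hy.2
      · intro h
        simp only [hf, Sum.elim_inl, Sum.elim_inr, id_eq] at h
        subst h
        exact Set.disjoint_left.mp hdisj (memN₁ hy) hx.2
      · cases w; cases w'; exact absurd rfl hxy
    have nonadj : ∀ x y, G'.Adj (Sum.inl u) x → G'.Adj (Sum.inl u) y →
        ¬ G'.Adj x y → ¬ G.Adj (f x) (f y) := by
      rintro (w | w) (w' | w') hx hy hxy
      · simp only [hf, Sum.elim_inl, id_eq]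
        by_cases hwv : w = v
        · by_cases hw'v : w' = v
          · rw [hwv, hw'v]; exact G.loopless.irrefl v
          · rw [hwv]
            intro hadj
            have hu1 : u ∈ N₁ := memN₁ (hwv ▸ hx)
            have huw' : G.Adj u w' := adjuw w' hw'v hy
            have hw'1 : w' ∈ N₁ := (key u w' (hN₁ u hu1) hadj huw').mp hu1
            exact hxy (Or.inr (Or.inl ⟨hwv, hw'v, hw'1⟩))
        · by_cases hw'v : w' = v
          · rw [hw'v]
            intro hadj
            have hu1 : u ∈ N₁ := memN₁ (hw'v ▸ hy)
            have huw : G.Adj u w := adjuw w hwv hx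
            have hw1 : w ∈ N₁ := (key u w (hN₁ u hu1) hadj.symm huw).mp hu1
            exact hxy (Or.inr (Or.inr ⟨hwv, hw'v, hw1⟩))
          · intro hadj
            exact hxy (Or.inl ⟨hwv, hw'v, hadj⟩)
      · simp only [hf, Sum.elim_inl, Sum.elim_inr, id_eq]
        by_cases hwv : w = v
        · rw [hwv]; exact G.loopless.irrefl v
        · intro hadj
          have hu2 : u ∈ N₂ := hy.2
          have huw : G.Adj u w := adjuw w hwv hx
          have hw2 : w ∈ N₂ := by
            rcases hmem w hadj.symm with h1 | h2
            · have hu1 : u ∈ N₁ := (key u w (hN₂ u hu2) hadj.symm huw).mpr h1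
              exact absurd hu1 (Set.disjoint_right.mp hdisj hu2)
            · exact h2
          exact hxy ⟨hwv, hw2⟩
      · simp only [hf, Sum.elim_inl, Sum.elim_inr, id_eq]
        by_cases hw'v : w' = v
        · rw [hw'v]; exact G.loopless.irrefl v
        · intro hadj
          have hu2 : u ∈ N₂ := hx.2
          have huw' : G.Adj u w' := adjuw w' hw'v hy
          have hw'2 : w' ∈ N₂ := by
            rcases hmem w' hadj with h1 | h2
            · have hu1 : u ∈ N₁ := (key u w' (hN₂ u hu2) hadj huw').mpr h1
              exact absurd hu1 (Set.disjoint_right.mp hdisj hu2)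
            · exact h2
          exact hxy ⟨hw'v, hw'2⟩
      · simp only [hf, Sum.elim_inr]
        exact G.loopless.irrefl v
    exact ⟨f a, f b, f c, inj a b ha hb hab, inj a c ha hc hac, inj b c hb hc hbc,
      adjG a ha, adjG b hb, adjG c hc,
      nonadj a b ha hb nab, nonadj a c ha hc nac, nonadj b c hb hc nbc⟩
  · rintro ⟨a, b, c, hab, hac, hbc, ha, hb, hc, nab, nac, nbc⟩
    have getN₁ : ∀ x, G'.Adj (Sum.inl v) x → ∃ w, x = Sum.inl w ∧ w ≠ v ∧ w ∈ N₁ := by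
      rintro (w | w) hx
      · rcases hx with ⟨h1, _, _⟩ | ⟨_, h2, h3⟩ | ⟨h1, _, _⟩
        · exact absurd rfl h1
        · exact ⟨w, rfl, h2, h3⟩
        · exact absurd rfl h1
      · exact absurd rfl hx.1
    obtain ⟨a', rfl, hav, ha1⟩ := getN₁ a ha
    obtain ⟨b', rfl, hbv, hb1⟩ := getN₁ b hb
    obtain ⟨c', rfl, hcv, hc1⟩ := getN₁ c hc
    refine ⟨a', b', c', fun h => hab (by rw [h]), fun h => hac (by rw [h]),
      fun h => hbc (by rw [h]), hN₁ a' ha1, hN₁ b' hb1, hN₁ c' hc1, ?_, ?_, ?_⟩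
    · exact fun h => nab (Or.inl ⟨hav, hbv, h⟩)
    · exact fun h => nac (Or.inl ⟨hav, hcv, h⟩)
    · exact fun h => nbc (Or.inl ⟨hbv, hcv, h⟩)
  · rintro ⟨a, b, c, hab, hac, hbc, ha, hb, hc, nab, nac, nbc⟩
    have getN₂ : ∀ x, G'.Adj (Sum.inr ()) x → ∃ w, x = Sum.inl w ∧ w ≠ v ∧ w ∈ N₂ := by
      rintro (w | w) hx
      · exact ⟨w, rfl, hx.1, hx.2⟩
      · exact hx.elim
    obtain ⟨a', rfl, hav, ha2⟩ := getN₂ a ha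
    obtain ⟨b', rfl, hbv, hb2⟩ := getN₂ b hb
    obtain ⟨c', rfl, hcv, hc2⟩ := getN₂ c hc
    refine ⟨a', b', c', fun h => hab (by rw [h]), fun h => hac (by rw [h]),
      fun h => hbc (by rw [h]), hN₂ a' ha2, hN₂ b' hb2, hN₂ c' hc2, ?_, ?_, ?_⟩
    · exact fun h => nab (Or.inl ⟨hav, hbv, h⟩)
    · exact fun h => nac (Or.inl ⟨hav, hcv, h⟩)
    · exact fun h => nbc (Or.inl ⟨hbv, hcv, h⟩)
end
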